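/- Let F be a real polynomial of degree less than N with coefficients F_0, …, F_{N−1}, for r ≥ 0 let β*_r F denote the remainder on dividing ∑_{k=0}^{N−1} β_{r,k}·F_k·X^{k+r} by A(X) = X^N + 2^{−b} X − 1, and let z ∈ ℂ satisfy A(z) = 0. Then the series ∑_{r=0}^∞ (β*_r F)(z) converges and equals F(β(z)) = ∑_{k=0}^{N−1} F_k·β(z)^k, where β(z) := z·(1 − 2^{−b} z)^{−1/N} is defined using the principal branch of the complex power. -/

import Mathlib

open Polynomial

/-- Generalized binomial coefficient `C(x, r) = x (x-1) ⋯ (x-r+1) / r!`. -/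
noncomputable def gbc (x : ℝ) (r : ℕ) : ℝ :=
  (∏ j ∈ Finset.range r, (x - j)) / (r.factorial : ℝ)

/-- `β_{r,k} = C(-k/N, r) (-2^(-b))^r`. -/
noncomputable def betaC (b N r k : ℕ) : ℝ :=
  gbc (-(k : ℝ) / N) r * (-(2:ℝ) ^ (-(b:ℤ))) ^ r

/-- The polynomial `A(X) = X^N + 2^(-b) X - 1` over `ℝ`. -/
noncomputable def Apoly (b N : ℕ) : Polynomial ℝ :=
  X ^ N + C ((2:ℝ) ^ (-(b:ℤ))) * X - 1

/-- `β*_r F`: the remainder of `∑_{k<N} β_{r,k} F_k X^(k+r)` modulo `A(X)`. -/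
noncomputable def bstar (b N r : ℕ) (F : Polynomial ℝ) : Polynomial ℝ :=
  (∑ k ∈ Finset.range N, C (betaC b N r k * F.coeff k) * X ^ (k + r)) %ₘ Apoly b N

/-- The function `β(z) = z (1 - 2^(-b) z)^(-1/N)` (principal branch). -/
noncomputable def betaF (b N : ℕ) (z : ℂ) : ℂ :=
  z * (1 - (2:ℂ) ^ (-(b:ℤ)) * z) ^ (-1 / (N:ℂ))

open Complex Metric Finset
open scoped NNReal

lemma slit_of_norm_lt_one {u : ℂ} (hu : ‖u‖ < 1) : 1 + u ∈ slitPlane := by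
  rw [Complex.mem_slitPlane_iff]
  left
  have : |u.re| ≤ ‖u‖ := Complex.abs_re_le_norm u
  simp only [Complex.add_re, Complex.one_re]
  have := abs_le.1 this
  linarith

lemma hasDerivAt_onePlus_cpow {u : ℂ} (hu : ‖u‖ < 1) (a : ℂ) :
    HasDerivAt (fun v : ℂ => (1 + v) ^ a) (a * (1 + u) ^ (a - 1)) u := by
  have h0 : HasDerivAt (fun v : ℂ => 1 + v) 1 u := (hasDerivAt_id u).const_add 1
  simpa using h0.cpow_const (slit_of_norm_lt_one hu)

lemma iteratedDeriv_onePlus_cpow (a : ℂ) (n : ℕ) :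
    ∀ u : ℂ, ‖u‖ < 1 →
      iteratedDeriv n (fun v : ℂ => (1 + v) ^ a) u
        = (∏ j ∈ Finset.range n, (a - j)) * (1 + u) ^ (a - n) := by
  induction n with
  | zero => intro u hu; simp
  | succ n ih =>
    intro u hu
    rw [iteratedDeriv_succ]
    have hev : iteratedDeriv n (fun v : ℂ => (1 + v) ^ a)
        =ᶠ[nhds u] fun v => (∏ j ∈ Finset.range n, (a - j)) * (1 + v) ^ (a - n) := by
      filter_upwards [Metric.ball_mem_nhds u (by linarith : (0:ℝ) < 1 - ‖u‖)] with v hv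
      apply ih
      have : ‖v - u‖ < 1 - ‖u‖ := by simpa [Metric.mem_ball, dist_eq_norm] using hv
      calc ‖v‖ = ‖v - u + u‖ := by ring_nf
        _ ≤ ‖v - u‖ + ‖u‖ := norm_add_le _ _
        _ < 1 := by linarith
    rw [hev.deriv_eq]
    have hd : HasDerivAt (fun v : ℂ => (∏ j ∈ Finset.range n, (a - j)) * (1 + v) ^ (a - n))
        ((∏ j ∈ Finset.range n, (a - j)) * ((a - n) * (1 + u) ^ (a - n - 1))) u :=
      (hasDerivAt_onePlus_cpow hu (a - n)).const_mul _
    rw [hd.deriv, Finset.prod_range_succ, show a - (↑(n+1):ℂ) = a - ↑n - 1 by push_cast; ring, mul_assoc]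

/-- Generalized binomial series. -/
lemma hasSum_binomial (a : ℂ) {w : ℂ} (hw : ‖w‖ < 1) :
    HasSum (fun r : ℕ => (∏ j ∈ Finset.range r, (a - j)) / (r.factorial : ℂ) * w ^ r)
      ((1 + w) ^ a) := by
  have hwn : (0:ℝ) ≤ ‖w‖ := norm_nonneg w
  set r0 : ℝ := (1 + ‖w‖) / 2 with hr0
  have hr0' : 0 ≤ r0 := by positivity
  set R : ℝ≥0 := r0.toNNReal with hRdef
  have hRc : (R : ℝ) = r0 := Real.coe_toNNReal _ hr0'
  have hR1 : (R : ℝ) < 1 := by rw [hRc, hr0]; linarith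
  have hwR : ‖w‖ < (R : ℝ) := by rw [hRc, hr0]; linarith
  have hR0 : 0 < R := by
    rw [← NNReal.coe_lt_coe, hRc, hr0]; positivity
  have hdiff : DifferentiableOn ℂ (fun v : ℂ => (1 + v) ^ a) (closedBall 0 (R:ℝ)) := by
    intro u hu
    have hu1 : ‖u‖ < 1 := by
      have : ‖u‖ ≤ (R:ℝ) := by simpa [Metric.mem_closedBall, dist_eq_norm] using hu
      linarith
    exact (hasDerivAt_onePlus_cpow hu1 a).differentiableAt.differentiableWithinAt
  have hball := hdiff.hasFPowerSeriesOnBall hR0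
  have hmem : w ∈ Metric.eball (0:ℂ) R := by
    rw [Metric.mem_eball, edist_zero_right]
    have : ‖w‖₊ < R := by rw [← NNReal.coe_lt_coe]; simpa using hwR
    exact_mod_cast ENNReal.coe_lt_coe.2 this
  have hs := hball.hasSum_iteratedFDeriv hmem
  simp only [zero_add] at hs
  have key : ∀ n : ℕ, ((n.factorial : ℂ))⁻¹ • iteratedFDeriv ℂ n (fun v : ℂ => (1+v)^a) 0
      (fun _ => w) = (∏ j ∈ Finset.range n, (a - j)) / (n.factorial : ℂ) * w ^ n := by
    intro n
    rw [iteratedFDeriv_apply_eq_iteratedDeriv_mul_prod,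
      iteratedDeriv_onePlus_cpow a n 0 (by simp)]
    simp only [Finset.prod_const, Finset.card_univ, Fintype.card_fin, smul_eq_mul,
      add_zero, Complex.one_cpow]
    ring
  have heq : (fun n : ℕ => ((n.factorial : ℂ))⁻¹ • iteratedFDeriv ℂ n
      (fun v : ℂ => (1+v)^a) 0 (fun _ => w))
      = fun n => (∏ j ∈ Finset.range n, (a - j)) / (n.factorial : ℂ) * w ^ n := funext key
  rwa [heq] at hs

/-- if `z` is a (complex) root of `A(X) = X^N + 2^(-b) X - 1`, then
`∑_r (β*_r F)(z)` converges to `F(β(z)) = ∑_{k<N} F_k β(z)^k`. -/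
theorem bstar_evaluation (b N : ℕ) (hb : 4 ≤ b) (hN : 3 ≤ N)
    (F : Polynomial ℝ) (hF : F.natDegree < N)
    (z : ℂ) (hz : z ^ N + (2:ℂ) ^ (-(b:ℤ)) * z - 1 = 0) :
    HasSum (fun r : ℕ => Polynomial.aeval z (bstar b N r F))
      (∑ k ∈ Finset.range N, (F.coeff k : ℂ) * (betaF b N z) ^ k) := by
  -- basic facts
  have hzN : z ^ N = 1 - (2:ℂ) ^ (-(b:ℤ)) * z := by linear_combination hz
  -- the monicity of A
  have h1N : (1 : WithBot ℕ) < (N : WithBot ℕ) := by exact_mod_cast (by omega : 1 < N)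
  have hmonic : (Apoly b N).Monic := by
    have hdeg : degree (C ((2:ℝ) ^ (-(b:ℤ))) * X - 1) < degree ((X : Polynomial ℝ) ^ N) := by
      rw [degree_X_pow]
      have hlin := degree_linear_le (a := (2:ℝ) ^ (-(b:ℤ))) (b := (-1:ℝ))
      simp only [map_neg, map_one] at hlin
      calc degree (C ((2:ℝ) ^ (-(b:ℤ))) * X - 1)
          = degree (C ((2:ℝ) ^ (-(b:ℤ))) * X + -1) := by rw [sub_eq_add_neg]
        _ ≤ 1 := hlin
        _ < (N : WithBot ℕ) := h1N
    have := (monic_X_pow (R := ℝ) N).add_of_left hdeg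
    have heq : Apoly b N = X ^ N + (C ((2:ℝ) ^ (-(b:ℤ))) * X - 1) := by
      rw [Apoly]; ring
    rwa [heq]
  have hA0 : (aeval z) (Apoly b N) = 0 := by
    have : (aeval z) (Apoly b N) = z ^ N + (2:ℂ) ^ (-(b:ℤ)) * z - 1 := by
      simp only [Apoly, map_sub, map_add, map_mul, map_pow, aeval_X, aeval_C, map_one,
        Complex.coe_algebraMap]
      push_cast
      ring
    rw [this, hz]
  -- value of bstar at z
  have haeval : ∀ r : ℕ, (aeval z) (bstar b N r F)
      = ∑ k ∈ Finset.range N, (betaC b N r k : ℂ) * (F.coeff k : ℂ) * z ^ (k + r) := by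
    intro r
    rw [bstar, modByMonic_eq_sub_mul_div _ (Apoly b N), map_sub, map_mul, hA0, zero_mul, sub_zero,
      map_sum]
    refine Finset.sum_congr rfl fun k _ => ?_
    simp only [map_mul, map_pow, aeval_X, aeval_C, Complex.coe_algebraMap]
  have hfun : (fun r : ℕ => (aeval z) (bstar b N r F))
      = fun r => ∑ k ∈ Finset.range N, (betaC b N r k : ℂ) * (F.coeff k : ℂ) * z ^ (k + r) :=
    funext haeval
  rw [hfun]
  -- size bound on z
  have he2 : ‖(2:ℂ) ^ (-(b:ℤ))‖ = (2:ℝ) ^ (-(b:ℤ)) := by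
    rw [norm_zpow]; norm_num
  have hebound : (2:ℝ) ^ (-(b:ℤ)) ≤ 1/16 := by
    rw [zpow_neg]
    rw [show (1:ℝ)/16 = ((2:ℝ)^(4:ℤ))⁻¹ by norm_num]
    apply inv_anti₀ (by norm_num)
    apply zpow_le_zpow_right₀ (by norm_num)
    exact_mod_cast hb
  have hepos : (0:ℝ) < (2:ℝ) ^ (-(b:ℤ)) := by positivity
  have hzle : ‖z‖ ≤ 2 := by
    by_contra h
    push_neg at h
    have h1 : ‖z‖ ^ N = ‖z ^ N‖ := (norm_pow z N).symm
    have h2 : ‖z ^ N‖ ≤ 1 + (2:ℝ) ^ (-(b:ℤ)) * ‖z‖ := by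
      rw [hzN]
      calc ‖1 - (2:ℂ) ^ (-(b:ℤ)) * z‖ ≤ ‖(1:ℂ)‖ + ‖(2:ℂ) ^ (-(b:ℤ)) * z‖ := norm_sub_le _ _
        _ = 1 + (2:ℝ) ^ (-(b:ℤ)) * ‖z‖ := by rw [norm_mul, he2, norm_one]
    have h3 : ‖z‖ ^ 3 ≤ ‖z‖ ^ N := by
      apply pow_le_pow_right₀ (by linarith) hN
    have h4 : (2:ℝ) ^ (-(b:ℤ)) * ‖z‖ ≤ ‖z‖ := by
      nlinarith
    have h5 : ‖z‖ ^ 3 = ‖z‖ * ‖z‖ * ‖z‖ := by ring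
    nlinarith [h1, h2, h3, h4, h5]
  have hw : ‖-(2:ℂ) ^ (-(b:ℤ)) * z‖ < 1 := by
    rw [norm_mul, norm_neg, he2]
    nlinarith
  -- s ≠ 0
  set s : ℂ := 1 - (2:ℂ) ^ (-(b:ℤ)) * z with hsdef
  have hs0 : s ≠ 0 := by
    intro h0
    have hz0 : z = 0 := by
      have hN0 : z ^ N = 0 := by rw [hzN, h0]
      exact pow_eq_zero_iff (by omega : N ≠ 0) |>.1 hN0
    rw [hsdef, hz0, mul_zero, sub_zero] at h0
    exact one_ne_zero h0
  -- per-k HasSum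
  refine hasSum_sum fun k _ => ?_
  have hbin := (hasSum_binomial (-(k:ℂ)/(N:ℂ)) hw).mul_left ((F.coeff k : ℂ) * z ^ k)
  have h1w : 1 + -(2:ℂ) ^ (-(b:ℤ)) * z = s := by rw [hsdef]; ring
  rw [h1w] at hbin
  have hpow : (s ^ (-1/(N:ℂ))) ^ k = s ^ (-(k:ℂ)/(N:ℂ)) := by
    rw [Complex.cpow_def_of_ne_zero hs0, Complex.cpow_def_of_ne_zero hs0,
      ← Complex.exp_nat_mul]
    congr 1
    ring
  have hsum : (F.coeff k : ℂ) * z ^ k * s ^ (-(k:ℂ)/(N:ℂ))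
      = (F.coeff k : ℂ) * (betaF b N z) ^ k := by
    rw [betaF, mul_pow, ← hsdef, hpow]
    ring
  rw [hsum] at hbin
  refine hbin.congr_fun fun r => ?_
  simp only [betaC, gbc, mul_pow, pow_add]
  push_cast
  ring
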